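/- Let θ ∈ (0, π/2) and define g : ℝ → ℝ by g(u) = (cos(u·tan θ) − cos θ)·sec²θ for |u| ≤ θ·cot θ and g(u) = 0 otherwise. Let w = g ∗ g be the convolution, w(u) = ∫_{−∞}^{∞} g(τ)·g(u − τ) dτ. Then w(0) = (θ·tan θ + 3θ·cot θ − 3)·sec²θ. -/

import Mathlib

/-- The value of the convolution `w = g ∗ g` at `0`, where
`g(u) = (cos(u tan θ) - cos θ) sec²θ` for `|u| ≤ θ cot θ` and `g(u) = 0` otherwise:
`w(0) = (θ tan θ + 3θ cot θ - 3) sec²θ`. -/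
theorem convolution_at_zero (θ : ℝ) (hθ : θ ∈ Set.Ioo 0 (Real.pi / 2))
    (g : ℝ → ℝ)
    (hg : ∀ u : ℝ, g u =
      if |u| ≤ θ * (Real.cos θ / Real.sin θ) then
        (Real.cos (u * Real.tan θ) - Real.cos θ) / Real.cos θ ^ 2
      else 0)
    (w : ℝ → ℝ) (hw : ∀ u : ℝ, w u = ∫ τ : ℝ, g τ * g (u - τ)) :
    w 0 = (θ * Real.tan θ + 3 * θ * (Real.cos θ / Real.sin θ) - 3) / Real.cos θ ^ 2 := by
  obtain ⟨hθ0, hθ2⟩ := hθ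
  have hπ := Real.pi_pos
  have hc : 0 < Real.cos θ := Real.cos_pos_of_mem_Ioo ⟨by linarith, hθ2⟩
  have hs : 0 < Real.sin θ := Real.sin_pos_of_pos_of_lt_pi hθ0 (by linarith)
  have htan : Real.tan θ = Real.sin θ / Real.cos θ := Real.tan_eq_sin_div_cos θ
  have ht : 0 < Real.tan θ := by rw [htan]; positivity
  set t := Real.tan θ with ht'
  set c := Real.cos θ with hc'
  set s := Real.sin θ with hs'
  set a := θ * (c / s) with ha
  have ha0 : 0 < a := by positivity
  have hat : a * t = θ := by
    rw [ha, htan]; field_simp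
  have key : (fun τ : ℝ => g τ * g (0 - τ)) = Set.indicator (Set.Icc (-a) a)
      (fun τ => ((Real.cos (τ * t) - c) / c ^ 2) ^ 2) := by
    funext τ
    rw [hg, hg]
    rw [Set.indicator_apply]
    simp only [zero_sub, abs_neg, neg_mul, Real.cos_neg, Set.mem_Icc, ← abs_le, ← ha]
    by_cases h : |τ| ≤ a
    · simp only [if_pos h]; ring
    · simp only [if_neg h]; ring
  have hF : ∀ x ∈ Set.uIcc (-a) a, HasDerivAt
      (fun x : ℝ => (x/2 + Real.sin (x*t)*Real.cos (x*t)/(2*t) - 2*c*Real.sin (x*t)/t + c^2*x) / c^4)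
      (((Real.cos (x * t) - c) / c ^ 2) ^ 2) x := by
    intro x _
    have h1 : HasDerivAt (fun x : ℝ => x * t) t x := by
      simpa using (hasDerivAt_id x).mul_const t
    have hsin : HasDerivAt (fun x : ℝ => Real.sin (x*t)) (Real.cos (x*t) * t) x :=
      (Real.hasDerivAt_sin (x*t)).comp (h := fun x : ℝ => x * t) x h1
    have hcos : HasDerivAt (fun x : ℝ => Real.cos (x*t)) (-Real.sin (x*t) * t) x :=
      (Real.hasDerivAt_cos (x*t)).comp (h := fun x : ℝ => x * t) x h1
    have hD := ((((hasDerivAt_id x).div_const 2).add ((hsin.mul hcos).div_const (2*t))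
        |>.sub (((hsin.const_mul (2*c))).div_const t)
        |>.add ((hasDerivAt_id x).const_mul (c^2))).div_const (c^4))
    simp only [id_eq] at hD
    refine hD.congr_deriv ?_
    have hpy : Real.sin (x*t)^2 + Real.cos (x*t)^2 = 1 := Real.sin_sq_add_cos_sq _
    field_simp
    linear_combination (-1) * hpy
  have hint : IntervalIntegrable (fun x : ℝ => ((Real.cos (x * t) - c) / c ^ 2) ^ 2)
      MeasureTheory.volume (-a) a := by
    apply Continuous.intervalIntegrable
    fun_prop
  rw [hw, key, MeasureTheory.integral_indicator measurableSet_Icc,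
    MeasureTheory.integral_Icc_eq_integral_Ioc,
    ← intervalIntegral.integral_of_le (by linarith : -a ≤ a),
    intervalIntegral.integral_eq_sub_of_hasDerivAt hF hint]
  have hnegat : (-a) * t = -θ := by rw [neg_mul, hat]
  rw [hat, hnegat, Real.sin_neg, Real.cos_neg, ← hs', ← hc']
  have hpy : s^2 + c^2 = 1 := Real.sin_sq_add_cos_sq θ
  rw [htan, ha]
  field_simp
  linear_combination (-(2*θ)) * hpy
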